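/- Let a ≤ b be real numbers with b − a ≥ 1, and let f, g : ℝ → ℝ be twice continuously differentiable on [a, b]. Define the operator L(h)(s) = h''(s) − (3/2)·h(s) + (1/8)·(h(s + 1/2) + h(s − 1/2)). If L(f)(s) ≤ L(g)(s) for every s ∈ (a + 1/2, b − 1/2), and f(s) ≥ g(s) for every s ∈ [a, a + 1/2] ∪ [b − 1/2, b], then f(s) ≥ g(s) for every s ∈ [a, b]. -/

import Mathlib

open Set Filter Topology

private lemma iterDeriv2_eq_deriv_deriv {a b : ℝ} (hab : a < b) {f : ℝ → ℝ}
    {s : ℝ} (hs : s ∈ Set.Ioo a b) :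
    iteratedDerivWithin 2 f (Set.Icc a b) s = deriv (deriv f) s := by
  have hU : UniqueDiffOn ℝ (Set.Icc a b) := uniqueDiffOn_Icc hab
  have hmem : Set.Icc a b ∈ 𝓝 s := Icc_mem_nhds hs.1 hs.2
  have h1 : ∀ t ∈ Set.Ioo a b,
      iteratedDerivWithin 1 f (Set.Icc a b) t = deriv f t := by
    intro t ht
    rw [iteratedDerivWithin_one,
      derivWithin_of_mem_nhds (Icc_mem_nhds ht.1 ht.2)]
  have heq : iteratedDerivWithin 1 f (Set.Icc a b) =ᶠ[𝓝 s] deriv f :=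
    Filter.eventually_of_mem (isOpen_Ioo.mem_nhds hs) h1
  rw [show (2 : ℕ) = 1 + 1 from rfl,
    iteratedDerivWithin_succ,
    derivWithin_of_mem_nhds hmem, heq.deriv_eq]

theorem delay_comparison_principle (a b : ℝ) (hab : a ≤ b) (hlen : 1 ≤ b - a)
    (f g : ℝ → ℝ)
    (hf : ContDiffOn ℝ 2 f (Set.Icc a b))
    (hg : ContDiffOn ℝ 2 g (Set.Icc a b))
    (hL : ∀ s ∈ Set.Ioo (a + 1/2) (b - 1/2),
      iteratedDerivWithin 2 f (Set.Icc a b) s - (3/2) * f s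
          + (1/8) * (f (s + 1/2) + f (s - 1/2))
        ≤ iteratedDerivWithin 2 g (Set.Icc a b) s - (3/2) * g s
          + (1/8) * (g (s + 1/2) + g (s - 1/2)))
    (hbd : ∀ s ∈ Set.Icc a (a + 1/2) ∪ Set.Icc (b - 1/2) b, g s ≤ f s) :
    ∀ s ∈ Set.Icc a b, g s ≤ f s := by
  have hab' : a < b := by linarith
  set u : ℝ → ℝ := fun t => f t - g t with hu_def
  have hu : ContDiffOn ℝ 2 u (Set.Icc a b) := hf.sub hg
  have hucont : ContinuousOn u (Set.Icc a b) := hu.continuousOn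
  obtain ⟨s₀, hs₀, hmin⟩ :=
    isCompact_Icc.exists_isMinOn (Set.nonempty_Icc.2 hab) hucont
  suffices h0 : 0 ≤ u s₀ by
    intro s hs
    have h1 : u s₀ ≤ u s := hmin hs
    simp only [hu_def] at h1 h0 ⊢
    linarith
  by_contra hneg
  push_neg at hneg
  -- s₀ lies in the open middle interval
  have hleft : a + 1/2 < s₀ := by
    by_contra h
    push_neg at h
    exact absurd (sub_nonneg.2 (hbd s₀ (Or.inl ⟨hs₀.1, h⟩))) (not_le.2 hneg)
  have hright : s₀ < b - 1/2 := by
    by_contra h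
    push_neg at h
    exact absurd (sub_nonneg.2 (hbd s₀ (Or.inr ⟨h, hs₀.2⟩))) (not_le.2 hneg)
  have hs₀Ioo : s₀ ∈ Set.Ioo a b := ⟨by linarith, by linarith⟩
  have hIccmem : Set.Icc a b ∈ 𝓝 s₀ := Icc_mem_nhds hs₀Ioo.1 hs₀Ioo.2
  -- differentiability facts on the interior
  have hdf : ∀ t ∈ Set.Ioo a b, DifferentiableAt ℝ f t := fun t ht =>
    ((hf.contDiffAt (Icc_mem_nhds ht.1 ht.2)).differentiableAt two_ne_zero)
  have hdg : ∀ t ∈ Set.Ioo a b, DifferentiableAt ℝ g t := fun t ht =>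
    ((hg.contDiffAt (Icc_mem_nhds ht.1 ht.2)).differentiableAt two_ne_zero)
  have hdf2 : DifferentiableAt ℝ (deriv f) s₀ := by
    have := ((hf.mono Set.Ioo_subset_Icc_self).deriv_of_isOpen isOpen_Ioo
      (by norm_num : (1:WithTop ℕ∞) + 1 ≤ 2))
    exact (this.differentiableOn one_ne_zero).differentiableAt (isOpen_Ioo.mem_nhds hs₀Ioo)
  have hdg2 : DifferentiableAt ℝ (deriv g) s₀ := by
    have := ((hg.mono Set.Ioo_subset_Icc_self).deriv_of_isOpen isOpen_Ioo
      (by norm_num : (1:WithTop ℕ∞) + 1 ≤ 2))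
    exact (this.differentiableOn one_ne_zero).differentiableAt (isOpen_Ioo.mem_nhds hs₀Ioo)
  have hderiv_u : deriv u =ᶠ[𝓝 s₀] fun t => deriv f t - deriv g t := by
    refine Filter.eventually_of_mem (isOpen_Ioo.mem_nhds hs₀Ioo) fun t ht => ?_
    exact deriv_sub (hdf t ht) (hdg t ht)
  have hdu2 : DifferentiableAt ℝ (deriv u) s₀ :=
    (hdf2.sub hdg2).congr_of_eventuallyEq hderiv_u
  have hc_eq : deriv (deriv u) s₀ = deriv (deriv f) s₀ - deriv (deriv g) s₀ := by
    rw [hderiv_u.deriv_eq, deriv_fun_sub hdf2 hdg2]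
  -- the operator inequality forces deriv (deriv u) s₀ < 0
  have hmemp : s₀ + 1/2 ∈ Set.Icc a b := ⟨by linarith, by linarith⟩
  have hmemm : s₀ - 1/2 ∈ Set.Icc a b := ⟨by linarith, by linarith⟩
  have hL₀ := hL s₀ ⟨hleft, hright⟩
  rw [iterDeriv2_eq_deriv_deriv hab' hs₀Ioo, iterDeriv2_eq_deriv_deriv hab' hs₀Ioo] at hL₀
  have hup : u s₀ ≤ u (s₀ + 1/2) := hmin hmemp
  have hum : u s₀ ≤ u (s₀ - 1/2) := hmin hmemm
  have hcneg : deriv (deriv u) s₀ < 0 := by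
    rw [hc_eq]
    simp only [hu_def] at hup hum hneg
    linarith
  -- first derivative vanishes at the interior minimum
  have hdu0 : deriv u s₀ = 0 := (hmin.isLocalMin hIccmem).deriv_eq_zero
  -- slope of deriv u tends to a negative number, so deriv u < 0 just right of s₀
  have hslope : Filter.Tendsto (slope (deriv u) s₀) (𝓝[≠] s₀) (𝓝 (deriv (deriv u) s₀)) :=
    hasDerivAt_iff_tendsto_slope.1 hdu2.hasDerivAt
  have hev : ∀ᶠ t in 𝓝[>] s₀, slope (deriv u) s₀ t < 0 :=
    (hslope.eventually_lt_const hcneg).filter_mono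
      (nhdsWithin_mono _ fun t ht => ne_of_gt ht)
  have hev2 : ∀ᶠ t in 𝓝[>] s₀, t < b :=
    Filter.eventually_of_mem (Ioo_mem_nhdsGT_of_mem ⟨le_rfl, hs₀Ioo.2⟩) fun t ht => ht.2
  obtain ⟨t₁, ht₁, hsub⟩ := mem_nhdsGT_iff_exists_Ioo_subset.1 (hev.and hev2)
  set m := (s₀ + t₁) / 2 with hm_def
  have ht₁' : s₀ < t₁ := ht₁
  have hmmem : m ∈ Set.Ioo s₀ t₁ := ⟨by simp only [hm_def]; linarith, by
    simp only [hm_def]; linarith⟩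
  have hmb : m < b := (hsub hmmem).2
  have hanti : StrictAntiOn u (Set.Icc s₀ m) := by
    apply strictAntiOn_of_deriv_neg (convex_Icc _ _)
    · exact hucont.mono fun x hx => ⟨by linarith [hx.1, hs₀Ioo.1], le_trans hx.2 hmb.le⟩
    · intro x hx
      rw [interior_Icc] at hx
      have hxIoo : x ∈ Set.Ioo s₀ t₁ := ⟨hx.1, lt_of_lt_of_le hx.2 hmmem.2.le⟩
      have hsl := (hsub hxIoo).1
      rw [slope_def_field] at hsl
      have hx0 : (0:ℝ) < x - s₀ := by linarith [hx.1]
      rw [div_neg_iff] at hsl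
      rcases hsl with ⟨h1, h2⟩ | ⟨h1, h2⟩
      · linarith
      · rw [hdu0] at h1; linarith
  have : u m < u s₀ := hanti ⟨le_rfl, hmmem.1.le⟩ ⟨hmmem.1.le, le_rfl⟩ hmmem.1
  have hmIcc : m ∈ Set.Icc a b := ⟨by linarith [hmmem.1, hs₀Ioo.1], hmb.le⟩
  exact absurd (hmin hmIcc) (not_le.2 this)
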